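/- Let N ≥ 2, let Ω ⊂ ℝ^N be a bounded domain with C³ boundary and unit volume, p ∈ (1, p_N), λ ≥ 0, and let (α, ψ) be a solution of problem (P)_λ on Ω. Then α + λ⟨ψ⟩ = 1/m, and if φ ∈ C²(Ω̄) with φ = 0 on ∂Ω satisfies −Δφ = (pλ + σ) V [φ] in Ω for some σ ∈ ℝ, then (α + λ⟨ψ⟩) ⟨φ⟩ = (λ(p−1) + σ) ⟨ψ [φ]⟩, i.e. (1/m)⟨φ⟩ = (λ(p−1) + σ) ⟨ψ [φ]⟩. -/

import Mathlib

open MeasureTheory Metric Set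

noncomputable section

/-- The Laplacian of a function on Euclidean space. -/
def lapl {N : ℕ} (f : EuclideanSpace ℝ (Fin N) → ℝ) (x : EuclideanSpace ℝ (Fin N)) : ℝ :=
  ∑ i : Fin N,
    fderiv ℝ (fun y => fderiv ℝ f y (EuclideanSpace.single i (1 : ℝ))) x
      (EuclideanSpace.single i (1 : ℝ))

/-- `(α, ψ)` is a solution of problem `(P)_λ` on `Ω`:
`ψ ∈ C²`, `-Δψ = (max (α + λψ) 0)^p` in `Ω`, `ψ = 0` on `∂Ω`, and
`∫_Ω (max (α + λψ) 0)^p = 1`. -/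
def IsSol {N : ℕ} (Ω : Set (EuclideanSpace ℝ (Fin N))) (p lam α : ℝ)
    (ψ : EuclideanSpace ℝ (Fin N) → ℝ) : Prop :=
  ContDiff ℝ 2 ψ ∧
  (∀ x ∈ Ω, -lapl ψ x = (max (α + lam * ψ x) 0) ^ p) ∧
  (∀ x ∈ frontier Ω, ψ x = 0) ∧
  (∫ x in Ω, (max (α + lam * ψ x) 0) ^ p) = 1

/-- The weight `V = (max (α + λψ) 0)^(p-1)`. -/
def Vfun {N : ℕ} (p lam α : ℝ) (ψ : EuclideanSpace ℝ (Fin N) → ℝ)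
    (x : EuclideanSpace ℝ (Fin N)) : ℝ :=
  (max (α + lam * ψ x) 0) ^ (p - 1)

/-- `m = ∫_Ω V`. -/
def mV {N : ℕ} (Ω : Set (EuclideanSpace ℝ (Fin N))) (p lam α : ℝ)
    (ψ : EuclideanSpace ℝ (Fin N) → ℝ) : ℝ :=
  ∫ x in Ω, Vfun p lam α ψ x

/-- The weighted average `⟨φ⟩ = (∫_Ω V φ) / m`. -/
def avgV {N : ℕ} (Ω : Set (EuclideanSpace ℝ (Fin N))) (p lam α : ℝ)
    (ψ φ : EuclideanSpace ℝ (Fin N) → ℝ) : ℝ :=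
  (∫ x in Ω, Vfun p lam α ψ x * φ x) / mV Ω p lam α ψ

/-- `σ` is an eigenvalue of the linearized operator `L_λ` at the solution `(α, ψ)`:
there is a nontrivial `φ ∈ C²(Ω̄)` vanishing on `∂Ω` with `-Δφ = (pλ + σ) V [φ]` in `Ω`. -/
def IsEigen {N : ℕ} (Ω : Set (EuclideanSpace ℝ (Fin N))) (p lam α : ℝ)
    (ψ : EuclideanSpace ℝ (Fin N) → ℝ) (σ : ℝ) : Prop :=
  ∃ φ : EuclideanSpace ℝ (Fin N) → ℝ, ContDiff ℝ 2 φ ∧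
    (∃ x ∈ closure Ω, φ x ≠ 0) ∧ (∀ x ∈ frontier Ω, φ x = 0) ∧
    ∀ x ∈ Ω, -lapl φ x = (p * lam + σ) * (Vfun p lam α ψ x * (φ x - avgV Ω p lam α ψ φ))

/-- `Ω` is a bounded domain of class `C³`: open, connected, bounded, and near every
boundary point `Ω` is the sublevel set of a `C³` function with nonvanishing gradient. -/
def IsC3Domain {N : ℕ} (Ω : Set (EuclideanSpace ℝ (Fin N))) : Prop :=
  IsOpen Ω ∧ IsConnected Ω ∧ Bornology.IsBounded Ω ∧
  ∀ x ∈ frontier Ω, ∃ (U : Set (EuclideanSpace ℝ (Fin N)))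
      (f : EuclideanSpace ℝ (Fin N) → ℝ),
    IsOpen U ∧ x ∈ U ∧ ContDiff ℝ 3 f ∧ (∀ y ∈ U, fderiv ℝ f y ≠ 0) ∧
    Ω ∩ U = {y ∈ U | f y < 0}


namespace Stmt16Aux

lemma cont_rpow {X : Type*} [TopologicalSpace X] {f : X → ℝ} (hf : Continuous f)
    (h0 : ∀ x, 0 ≤ f x) {q : ℝ} (hq : 0 < q) : Continuous fun x => f x ^ q := by
  rw [continuous_iff_continuousAt]
  intro x
  exact (Real.continuousAt_rpow_const (f x) q (Or.inr hq.le)).comp hf.continuousAt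

lemma intOn {N : ℕ} {Ω : Set (EuclideanSpace ℝ (Fin N))} (hb : Bornology.IsBounded Ω)
    {f : EuclideanSpace ℝ (Fin N) → ℝ} (hf : Continuous f) : IntegrableOn f Ω :=
  (hf.continuousOn.integrableOn_compact hb.isCompact_closure).mono_set subset_closure

/-- FTC on a bounded open subset of `ℝ` for a `C¹` function vanishing on the frontier. -/
lemma oneD {u : Set ℝ} (hu : IsOpen u) (hub : Bornology.IsBounded u)
    {G : ℝ → ℝ} (hG : ContDiff ℝ 1 G) (h0 : ∀ t ∈ frontier u, G t = 0) :
    (∫ t in u, deriv G t) = 0 := by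
  obtain ⟨R, hR⟩ := hub.subset_closedBall 0
  set a : ℝ → ℝ := fun x => sSup (uᶜ ∩ Iio x) with ha_def
  set b : ℝ → ℝ := fun x => sInf (uᶜ ∩ Ioi x) with hb_def
  have hane : ∀ x ∈ u, (uᶜ ∩ Iio x).Nonempty := by
    intro x hx
    have hxR := hR hx
    rw [mem_closedBall_zero_iff, Real.norm_eq_abs, abs_le] at hxR
    refine ⟨-R - 1, fun h => ?_, ?_⟩
    · have := hR h
      rw [mem_closedBall_zero_iff, Real.norm_eq_abs, abs_le] at this
      linarith [this.1]
    · simp only [mem_Iio]; linarith [hxR.1]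
  have hbne : ∀ x ∈ u, (uᶜ ∩ Ioi x).Nonempty := by
    intro x hx
    have hxR := hR hx
    rw [mem_closedBall_zero_iff, Real.norm_eq_abs, abs_le] at hxR
    refine ⟨R + 1, fun h => ?_, ?_⟩
    · have := hR h
      rw [mem_closedBall_zero_iff, Real.norm_eq_abs, abs_le] at this
      linarith [this.2]
    · simp only [mem_Ioi]; linarith [hxR.2]
  have habdd : ∀ x : ℝ, BddAbove (uᶜ ∩ Iio x) :=
    fun x => (bddAbove_Iio (a := x)).mono inter_subset_right
  have hbbdd : ∀ x : ℝ, BddBelow (uᶜ ∩ Ioi x) :=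
    fun x => (bddBelow_Ioi (a := x)).mono inter_subset_right
  have hamem : ∀ x ∈ u, a x ∈ uᶜ ∧ a x ≤ x := by
    intro x hx
    have h1 := csSup_mem_closure (hane x hx) (habdd x)
    have h2 := closure_inter_subset_inter_closure (uᶜ) (Iio x) h1
    rw [hu.isClosed_compl.closure_eq, closure_Iio] at h2
    exact ⟨h2.1, h2.2⟩
  have hbmem : ∀ x ∈ u, b x ∈ uᶜ ∧ x ≤ b x := by
    intro x hx
    have h1 := csInf_mem_closure (hbne x hx) (hbbdd x)
    have h2 := closure_inter_subset_inter_closure (uᶜ) (Ioi x) h1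
    rw [hu.isClosed_compl.closure_eq, closure_Ioi] at h2
    exact ⟨h2.1, h2.2⟩
  have halt : ∀ x ∈ u, a x < x := by
    intro x hx
    rcases (hamem x hx).2.lt_or_eq with h | h
    · exact h
    · exfalso; apply (hamem x hx).1; rw [h]; exact hx
  have hblt : ∀ x ∈ u, x < b x := by
    intro x hx
    rcases (hbmem x hx).2.lt_or_eq with h | h
    · exact h
    · exfalso; apply (hbmem x hx).1; rw [← h]; exact hx
  have hsub : ∀ x ∈ u, Ioo (a x) (b x) ⊆ u := by
    intro x hx t ht
    by_contra htu
    rcases lt_trichotomy t x with h | h | h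
    · have : t ≤ a x := le_csSup (habdd x) ⟨htu, h⟩
      linarith [ht.1]
    · exact htu (h ▸ hx)
    · have : b x ≤ t := csInf_le (hbbdd x) ⟨htu, h⟩
      linarith [ht.2]
  have hafr : ∀ x ∈ u, a x ∈ frontier u := by
    intro x hx
    rw [hu.frontier_eq]
    refine ⟨?_, (hamem x hx).1⟩
    have h1 : Ioo (a x) x ⊆ u := fun t ht => hsub x hx ⟨ht.1, ht.2.trans (hblt x hx)⟩
    have h2 : a x ∈ closure (Ioo (a x) x) := by
      rw [closure_Ioo (ne_of_lt (halt x hx))]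
      exact ⟨le_refl _, (halt x hx).le⟩
    exact closure_mono h1 h2
  have hbfr : ∀ x ∈ u, b x ∈ frontier u := by
    intro x hx
    rw [hu.frontier_eq]
    refine ⟨?_, (hbmem x hx).1⟩
    have h1 : Ioo x (b x) ⊆ u := fun t ht => hsub x hx ⟨(halt x hx).trans ht.1, ht.2⟩
    have h2 : b x ∈ closure (Ioo x (b x)) := by
      rw [closure_Ioo (ne_of_lt (hblt x hx))]
      exact ⟨(hblt x hx).le, le_refl _⟩
    exact closure_mono h1 h2
  have hcoh : ∀ x ∈ u, ∀ y ∈ Ioo (a x) (b x), a y = a x ∧ b y = b x := by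
    intro x hx y hy
    have hyu : y ∈ u := hsub x hx hy
    constructor
    · refine le_antisymm (csSup_le (hane y hyu) ?_) (le_csSup (habdd y) ⟨(hamem x hx).1, hy.1⟩)
      rintro t ⟨htu, hty⟩
      by_contra hlt
      push_neg at hlt
      exact htu (hsub x hx ⟨hlt, lt_trans hty hy.2⟩)
    · refine le_antisymm (csInf_le (hbbdd y) ⟨(hbmem x hx).1, hy.2⟩) (le_csInf (hbne y hyu) ?_)
      rintro t ⟨htu, hty⟩
      by_contra hlt
      push_neg at hlt
      exact htu (hsub x hx ⟨lt_trans hy.1 hty, hlt⟩)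
  set S : Set (ℝ × ℝ) := (fun x => (a x, b x)) '' u with hS_def
  have hScoh : ∀ s ∈ S, ∀ q : ℝ, q ∈ Ioo s.1 s.2 → q ∈ u ∧ (a q, b q) = s := by
    rintro s ⟨x, hx, rfl⟩ q hq
    refine ⟨hsub x hx hq, ?_⟩
    have := hcoh x hx q hq
    simp [this.1, this.2]
  have hSc : S.Countable := by
    have h1 : ∀ s : S, ∃ q : ℚ, (q : ℝ) ∈ Ioo (s : ℝ × ℝ).1 (s : ℝ × ℝ).2 := by
      rintro ⟨s, x, hx, rfl⟩
      obtain ⟨q, hq1, hq2⟩ := exists_rat_btwn (lt_trans (halt x hx) (hblt x hx))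
      exact ⟨q, hq1, hq2⟩
    choose f hf using h1
    have hinj : Function.Injective f := by
      rintro s s' hff
      have h2 := (hScoh s s.2 (f s) (hf s)).2
      have h3 := (hScoh s' s'.2 (f s') (hf s')).2
      rw [← hff] at h3
      exact Subtype.ext (h2 ▸ h3 ▸ rfl)
    exact Set.countable_coe_iff.mp (hinj.countable)
  haveI := hSc.to_subtype
  have hUU : u = ⋃ s : S, Ioo (s : ℝ × ℝ).1 (s : ℝ × ℝ).2 := by
    apply subset_antisymm
    · intro x hx
      exact mem_iUnion.2 ⟨⟨(a x, b x), mem_image_of_mem _ hx⟩, halt x hx, hblt x hx⟩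
    · refine iUnion_subset fun s => ?_
      obtain ⟨x, hx, hxe⟩ := s.2
      intro t ht
      rw [← hxe] at ht
      exact hsub x hx ht
  have hdis : Pairwise (Function.onFun Disjoint
      fun s : S => Ioo (s : ℝ × ℝ).1 (s : ℝ × ℝ).2) := by
    rintro s s' hne
    rw [Function.onFun, Set.disjoint_left]
    intro z hz hz'
    apply hne
    have h2 := (hScoh s s.2 z hz).2
    have h3 := (hScoh s' s'.2 z hz').2
    exact Subtype.ext (h2 ▸ h3 ▸ rfl)
  have hGd : Continuous (deriv G) := hG.continuous_deriv le_rfl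
  have hint : IntegrableOn (deriv G) u := by
    exact ((hGd.continuousOn).integrableOn_compact (isCompact_closedBall 0 R)).mono_set hR
  rw [hUU] at hint ⊢
  rw [integral_iUnion (fun s => measurableSet_Ioo) hdis hint]
  have hzero : ∀ s : S, (∫ t in Ioo (s : ℝ × ℝ).1 (s : ℝ × ℝ).2, deriv G t) = 0 := by
    rintro ⟨s, x, hx, rfl⟩
    have hle : a x ≤ b x := (lt_trans (halt x hx) (hblt x hx)).le
    have h1 : (∫ t in Ioo (a x) (b x), deriv G t) = ∫ t in (a x)..(b x), deriv G t := by
      rw [intervalIntegral.integral_of_le hle, integral_Ioc_eq_integral_Ioo]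
    rw [h1, intervalIntegral.integral_deriv_eq_sub
        (fun t _ => (hG.differentiable one_ne_zero).differentiableAt)
        (hGd.intervalIntegrable _ _)]
    rw [h0 _ (hafr x hx), h0 _ (hbfr x hx), sub_zero]
  simp only [hzero]
  exact tsum_zero

/-- Integral over a bounded open set of a partial derivative of a `C¹` function vanishing
on the frontier is zero. -/
lemma partial_zero {n : ℕ} {Ω : Set (EuclideanSpace ℝ (Fin (n + 1)))} (hO : IsOpen Ω)
    (hb : Bornology.IsBounded Ω) {g : EuclideanSpace ℝ (Fin (n + 1)) → ℝ}
    (hg : ContDiff ℝ 1 g) (h0 : ∀ x ∈ frontier Ω, g x = 0) (i : Fin (n + 1)) :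
    (∫ x in Ω, fderiv ℝ g x (EuclideanSpace.single i 1)) = 0 := by
  have hmeas : MeasurableSet Ω := hO.measurableSet
  set v : EuclideanSpace ℝ (Fin (n + 1)) := EuclideanSpace.single i (1 : ℝ) with hv
  set Teq : (ℝ × (Fin n → ℝ)) ≃ᵐ EuclideanSpace ℝ (Fin (n + 1)) :=
    (MeasurableEquiv.piFinSuccAbove (fun _ : Fin (n + 1) => ℝ) i).symm.trans
      (MeasurableEquiv.toLp 2 (Fin (n + 1) → ℝ)) with hTeq
  have hTmp : MeasurePreserving Teq volume volume := by
    have h1 := (EuclideanSpace.volume_preserving_symm_measurableEquiv_toLp (Fin (n + 1))).symm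
    have h2 := (volume_preserving_piFinSuccAbove (fun _ : Fin (n + 1) => ℝ) i).symm
    exact h1.comp h2
  have hline : ∀ (t : ℝ) (y : Fin n → ℝ), Teq (t, y) = Teq (0, y) + t • v := by
    intro t y
    ext j
    have h1 : ∀ s : ℝ, Teq (s, y) j = Fin.insertNth (α := fun _ => ℝ) i s y j := by
      intro s
      simp only [hTeq, MeasurableEquiv.trans_apply, MeasurableEquiv.piFinSuccAbove_symm_apply]
      rfl
    have h2 : (Teq (0, y) + t • v) j = Teq (0, y) j + t * v j := rfl
    rw [h2, h1, h1]
    rcases eq_or_ne j i with rfl | hne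
    · simp [Fin.insertNth_apply_same, hv, EuclideanSpace.single_apply]
    · obtain ⟨k, rfl⟩ := Fin.exists_succAbove_eq hne
      simp [Fin.insertNth_apply_succAbove, hv, EuclideanSpace.single_apply,
        (Fin.succAbove_ne i k)]
  have hcont : Continuous fun x => fderiv ℝ g x v :=
    (ContinuousLinearMap.apply ℝ ℝ v).continuous.comp (hg.continuous_fderiv one_ne_zero)
  have hFI : Integrable (Ω.indicator fun x => fderiv ℝ g x v) :=
    (intOn hb hcont).integrable_indicator hmeas
  rw [← integral_indicator hmeas]
  rw [← hTmp.integral_comp Teq.measurableEmbedding]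
  have hFI2 : Integrable ((Ω.indicator fun x => fderiv ℝ g x v) ∘ Teq)
      (volume.prod volume) := by
    rw [← Measure.volume_eq_prod]
    exact (hTmp.integrable_comp_emb Teq.measurableEmbedding).mpr hFI
  have hswap : (∫ z, (Ω.indicator fun x => fderiv ℝ g x v) (Teq z))
      = ∫ y, ∫ t, (Ω.indicator fun x => fderiv ℝ g x v) (Teq (t, y)) := by
    rw [show (volume : Measure (ℝ × (Fin n → ℝ))) = volume.prod volume from
      Measure.volume_eq_prod _ _]
    exact integral_prod_symm _ hFI2
  rw [hswap]
  have hinner : ∀ y : Fin n → ℝ,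
      (∫ t, (Ω.indicator fun x => fderiv ℝ g x v) (Teq (t, y))) = 0 := by
    intro y
    set c : EuclideanSpace ℝ (Fin (n + 1)) := Teq (0, y) with hc
    set G : ℝ → ℝ := fun t => g (c + t • v) with hGdef
    have hlc : Continuous fun t : ℝ => c + t • v :=
      continuous_const.add (continuous_id.smul continuous_const)
    have hG1 : ContDiff ℝ 1 G :=
      hg.comp (contDiff_const.add (contDiff_id.smul contDiff_const))
    have hder : ∀ t : ℝ, HasDerivAt G (fderiv ℝ g (c + t • v) v) t := by
      intro t
      have h1 : HasDerivAt (fun s : ℝ => c + s • v) v t := by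
        simpa using ((hasDerivAt_id t).smul_const v).const_add c
      exact ((hg.differentiable one_ne_zero) (c + t • v)).hasFDerivAt.comp_hasDerivAt t h1
    set u : Set ℝ := (fun t : ℝ => c + t • v) ⁻¹' Ω with hu_def
    have huo : IsOpen u := hO.preimage hlc
    have hnv : ‖v‖ = 1 := by rw [hv, EuclideanSpace.norm_single]; norm_num
    have hub : Bornology.IsBounded u := by
      obtain ⟨R, hR⟩ := hb.subset_closedBall 0
      apply (isBounded_closedBall (x := (0 : ℝ)) (r := R + ‖c‖)).subset
      intro t ht
      have h1 : ‖c + t • v‖ ≤ R := by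
        have := hR ht
        rwa [mem_closedBall_zero_iff] at this
      have h2 : ‖t • v‖ ≤ R + ‖c‖ := by
        calc ‖t • v‖ = ‖c + t • v - c‖ := by rw [add_sub_cancel_left]
          _ ≤ ‖c + t • v‖ + ‖c‖ := norm_sub_le _ _
          _ ≤ R + ‖c‖ := by linarith
      rw [mem_closedBall_zero_iff, Real.norm_eq_abs]
      rw [norm_smul, hnv, mul_one, Real.norm_eq_abs] at h2
      exact h2
    have hufr : ∀ t ∈ frontier u, G t = 0 := by
      intro t ht
      apply h0
      rw [hO.frontier_eq]
      have ht2 := ht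
      rw [huo.frontier_eq] at ht2
      constructor
      · exact (hlc.closure_preimage_subset Ω) ht2.1
      · exact ht2.2
    have hkey : ∀ t : ℝ, (Ω.indicator fun x => fderiv ℝ g x v) (Teq (t, y))
        = u.indicator (deriv G) t := by
      intro t
      rw [hline t y, ← hc]
      by_cases htu : t ∈ u
      · have htu' : c + t • v ∈ Ω := htu
        rw [indicator_of_mem htu, indicator_of_mem htu', (hder t).deriv]
      · have htu' : c + t • v ∉ Ω := htu
        rw [indicator_of_notMem htu, indicator_of_notMem htu']
    calc (∫ t, (Ω.indicator fun x => fderiv ℝ g x v) (Teq (t, y)))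
        = ∫ t, u.indicator (deriv G) t := by simp_rw [hkey]
      _ = ∫ t in u, deriv G t := integral_indicator huo.measurableSet
      _ = 0 := oneD huo hub hG1 hufr
  simp_rw [hinner]
  exact integral_zero _ _

lemma lapl_eq {N : ℕ} (f : EuclideanSpace ℝ (Fin N) → ℝ) (x : EuclideanSpace ℝ (Fin N)) :
    lapl f x = ∑ i : Fin N,
      fderiv ℝ (fun y => fderiv ℝ f y (EuclideanSpace.single i (1 : ℝ))) x
        (EuclideanSpace.single i (1 : ℝ)) := rfl

/-- Green's identity for two `C²` functions vanishing on the frontier of a bounded open set. -/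
lemma green {N : ℕ} {Ω : Set (EuclideanSpace ℝ (Fin N))} (hO : IsOpen Ω)
    (hb : Bornology.IsBounded Ω) {f g : EuclideanSpace ℝ (Fin N) → ℝ}
    (hf : ContDiff ℝ 2 f) (hg : ContDiff ℝ 2 g)
    (hf0 : ∀ x ∈ frontier Ω, f x = 0) (hg0 : ∀ x ∈ frontier Ω, g x = 0) :
    (∫ x in Ω, (f x * lapl g x - g x * lapl f x)) = 0 := by
  cases N with
  | zero =>
    have : ∀ x, f x * lapl g x - g x * lapl f x = 0 := by
      intro x
      simp [lapl]
    simp_rw [this]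
    simp
  | succ n =>
    have h12 : (1 : WithTop ℕ∞) ≤ 2 := by norm_num
    have hdf : ∀ i : Fin (n + 1),
        ContDiff ℝ 1 (fun x => fderiv ℝ f x (EuclideanSpace.single i (1 : ℝ))) :=
      fun i => (hf.fderiv_right (by norm_num)).clm_apply contDiff_const
    have hdg : ∀ i : Fin (n + 1),
        ContDiff ℝ 1 (fun x => fderiv ℝ g x (EuclideanSpace.single i (1 : ℝ))) :=
      fun i => (hg.fderiv_right (by norm_num)).clm_apply contDiff_const
    set W : Fin (n + 1) → EuclideanSpace ℝ (Fin (n + 1)) → ℝ :=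
      fun i x => f x * fderiv ℝ g x (EuclideanSpace.single i (1 : ℝ))
        - g x * fderiv ℝ f x (EuclideanSpace.single i (1 : ℝ)) with hW
    have hWc : ∀ i, ContDiff ℝ 1 (W i) := fun i =>
      ((hf.of_le h12).mul (hdg i)).sub ((hg.of_le h12).mul (hdf i))
    have hW0 : ∀ i, ∀ x ∈ frontier Ω, W i x = 0 := by
      intro i x hx
      simp [hW, hf0 x hx, hg0 x hx]
    have hpt : ∀ x, f x * lapl g x - g x * lapl f x
        = ∑ i : Fin (n + 1), fderiv ℝ (W i) x (EuclideanSpace.single i (1 : ℝ)) := by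
      intro x
      have hTerm : ∀ i : Fin (n + 1), fderiv ℝ (W i) x (EuclideanSpace.single i (1 : ℝ))
          = f x * fderiv ℝ (fun y => fderiv ℝ g y (EuclideanSpace.single i (1 : ℝ))) x
              (EuclideanSpace.single i (1 : ℝ))
            - g x * fderiv ℝ (fun y => fderiv ℝ f y (EuclideanSpace.single i (1 : ℝ))) x
              (EuclideanSpace.single i (1 : ℝ)) := by
        intro i
        have hfd : DifferentiableAt ℝ f x := (hf.differentiable two_ne_zero).differentiableAt
        have hgd : DifferentiableAt ℝ g x := (hg.differentiable two_ne_zero).differentiableAt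
        have hdfd : DifferentiableAt ℝ
            (fun y => fderiv ℝ f y (EuclideanSpace.single i (1 : ℝ))) x :=
          ((hdf i).differentiable one_ne_zero).differentiableAt
        have hdgd : DifferentiableAt ℝ
            (fun y => fderiv ℝ g y (EuclideanSpace.single i (1 : ℝ))) x :=
          ((hdg i).differentiable one_ne_zero).differentiableAt
        have e1 : fderiv ℝ (W i) x = fderiv ℝ
              (fun y => f y * fderiv ℝ g y (EuclideanSpace.single i (1 : ℝ))) x
            - fderiv ℝ (fun y => g y * fderiv ℝ f y (EuclideanSpace.single i (1 : ℝ))) x := by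
          rw [hW]
          exact fderiv_sub (hfd.mul hdgd) (hgd.mul hdfd)
        rw [e1, fderiv_fun_mul hfd hdgd, fderiv_fun_mul hgd hdfd]
        simp only [ContinuousLinearMap.sub_apply, ContinuousLinearMap.add_apply,
          ContinuousLinearMap.smul_apply, smul_eq_mul]
        ring
      rw [Finset.sum_congr rfl (fun i _ => hTerm i), lapl_eq, lapl_eq,
        Finset.mul_sum, Finset.mul_sum, ← Finset.sum_sub_distrib]
    have hWint : ∀ i : Fin (n + 1), IntegrableOn
        (fun x => fderiv ℝ (W i) x (EuclideanSpace.single i (1 : ℝ))) Ω := by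
      intro i
      apply intOn hb
      exact (ContinuousLinearMap.apply ℝ ℝ (EuclideanSpace.single i (1 : ℝ))).continuous.comp
        ((hWc i).continuous_fderiv one_ne_zero)
    calc (∫ x in Ω, (f x * lapl g x - g x * lapl f x))
        = ∫ x in Ω, ∑ i : Fin (n + 1),
            fderiv ℝ (W i) x (EuclideanSpace.single i (1 : ℝ)) :=
          integral_congr_ae (Filter.Eventually.of_forall hpt)
      _ = ∑ i : Fin (n + 1), ∫ x in Ω,
            fderiv ℝ (W i) x (EuclideanSpace.single i (1 : ℝ)) :=
          integral_finset_sum Finset.univ (fun i _ => hWint i)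
      _ = 0 := Finset.sum_eq_zero fun i _ =>
          partial_zero hO hb (hWc i) (hW0 i) i

end Stmt16Aux

open Stmt16Aux

theorem stmt16 (N : ℕ) (hN : 2 ≤ N) (Ω : Set (EuclideanSpace ℝ (Fin N)))
    (hΩ : IsC3Domain Ω) (hvol : volume Ω = 1) (p : ℝ) (hp1 : 1 < p)
    (hpN : N = 2 ∨ p < (N : ℝ) / ((N : ℝ) - 2))
    (lam : ℝ) (hlam : 0 ≤ lam) (α : ℝ) (ψ : EuclideanSpace ℝ (Fin N) → ℝ)
    (hsol : IsSol Ω p lam α ψ) :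
    α + lam * avgV Ω p lam α ψ ψ = 1 / mV Ω p lam α ψ ∧
    ∀ (σ : ℝ) (φ : EuclideanSpace ℝ (Fin N) → ℝ), ContDiff ℝ 2 φ →
      (∀ x ∈ frontier Ω, φ x = 0) →
      (∀ x ∈ Ω,
        -lapl φ x = (p * lam + σ) * (Vfun p lam α ψ x * (φ x - avgV Ω p lam α ψ φ))) →
      (α + lam * avgV Ω p lam α ψ ψ) * avgV Ω p lam α ψ φ =
        (lam * (p - 1) + σ) *
          ((∫ x in Ω, Vfun p lam α ψ x * (ψ x * (φ x - avgV Ω p lam α ψ φ))) /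
            mV Ω p lam α ψ) := by
  obtain ⟨hψ2, hpde, hψ0, hnorm⟩ := hsol
  have hopen : IsOpen Ω := hΩ.1
  have hbdd : Bornology.IsBounded Ω := hΩ.2.2.1
  have hmeas : MeasurableSet Ω := hopen.measurableSet
  have hψc : Continuous ψ := hψ2.continuous
  have hMc : Continuous fun x => max (α + lam * ψ x) 0 :=
    (continuous_const.add (continuous_const.mul hψc)).max continuous_const
  have hM0 : ∀ x, (0 : ℝ) ≤ max (α + lam * ψ x) 0 := fun x => le_max_right _ _
  have hVc : Continuous (Vfun p lam α ψ) := cont_rpow hMc hM0 (by linarith)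
  have hMpc : Continuous fun x => max (α + lam * ψ x) 0 ^ p := cont_rpow hMc hM0 (by linarith)
  have hV0 : ∀ x, 0 ≤ Vfun p lam α ψ x := fun x => Real.rpow_nonneg (hM0 x) _
  have hkey : ∀ x, Vfun p lam α ψ x * (α + lam * ψ x) = max (α + lam * ψ x) 0 ^ p := by
    intro x
    rcases le_or_gt (α + lam * ψ x) 0 with h | h
    · rw [Vfun, max_eq_right h, Real.zero_rpow (by linarith), Real.zero_rpow (by linarith),
        zero_mul]
    · have hMx : max (α + lam * ψ x) 0 = α + lam * ψ x := max_eq_left h.le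
      calc Vfun p lam α ψ x * (α + lam * ψ x)
          = (α + lam * ψ x) ^ (p - 1) * (α + lam * ψ x) := by rw [Vfun, hMx]
        _ = (α + lam * ψ x) ^ (p - 1 + 1) := (Real.rpow_add_one h.ne' _).symm
        _ = max (α + lam * ψ x) 0 ^ p := by rw [hMx]; norm_num
  have hIV : IntegrableOn (Vfun p lam α ψ) Ω := intOn hbdd hVc
  have hIVψ : IntegrableOn (fun x => Vfun p lam α ψ x * ψ x) Ω := intOn hbdd (hVc.mul hψc)
  have hm_ne : mV Ω p lam α ψ ≠ 0 := by
    intro hm0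
    have h1 : (fun x => Vfun p lam α ψ x) =ᵐ[volume.restrict Ω] 0 :=
      (integral_eq_zero_iff_of_nonneg (fun x => hV0 x) hIV).mp hm0
    have h2 : (fun x => max (α + lam * ψ x) 0 ^ p) =ᵐ[volume.restrict Ω] 0 := by
      filter_upwards [h1] with x hx
      have hMx : max (α + lam * ψ x) 0 = 0 := by
        by_contra hne
        have := (Real.rpow_eq_zero_iff_of_nonneg (hM0 x)).mp hx
        exact hne this.1
      simp only [Pi.zero_apply]
      rw [hMx, Real.zero_rpow (by linarith)]
    have h3 : (∫ x in Ω, max (α + lam * ψ x) 0 ^ p) = 0 := by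
      rw [integral_congr_ae h2]
      simp
    rw [hnorm] at h3
    norm_num at h3
  have hone : α * mV Ω p lam α ψ + lam * (∫ x in Ω, Vfun p lam α ψ x * ψ x) = 1 := by
    have h1 : (∫ x in Ω, Vfun p lam α ψ x * (α + lam * ψ x)) = 1 := by
      rw [setIntegral_congr_fun hmeas (fun x _ => hkey x)]
      exact hnorm
    have h2 : (∫ x in Ω, Vfun p lam α ψ x * (α + lam * ψ x))
        = α * mV Ω p lam α ψ + lam * ∫ x in Ω, Vfun p lam α ψ x * ψ x := by
      rw [setIntegral_congr_fun hmeas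
        (fun x _ => (by ring : Vfun p lam α ψ x * (α + lam * ψ x)
          = α * Vfun p lam α ψ x + lam * (Vfun p lam α ψ x * ψ x))),
        integral_add (hIV.const_mul α) (hIVψ.const_mul lam),
        integral_const_mul, integral_const_mul, mV]
    rw [← h2]
    exact h1
  have hpart1 : α + lam * avgV Ω p lam α ψ ψ = 1 / mV Ω p lam α ψ := by
    rw [avgV]
    field_simp
    linear_combination hone
  refine ⟨hpart1, ?_⟩
  intro σ φ hφ2 hφ0 hφpde
  have hφc : Continuous φ := hφ2.continuous
  set c := avgV Ω p lam α ψ φ with hc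
  set m := mV Ω p lam α ψ with hm
  set Q := ∫ x in Ω, Vfun p lam α ψ x * ψ x with hQ
  set P := ∫ x in Ω, Vfun p lam α ψ x * φ x with hP
  set T := ∫ x in Ω, Vfun p lam α ψ x * (ψ x * (φ x - c)) with hT
  have hcPm : c = P / m := by rw [hc, avgV, hP, hm]
  have hIT : IntegrableOn (fun x => Vfun p lam α ψ x * (ψ x * (φ x - c))) Ω :=
    intOn hbdd (hVc.mul (hψc.mul (hφc.sub continuous_const)))
  have hIφM : IntegrableOn (fun x => φ x * max (α + lam * ψ x) 0 ^ p) Ω :=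
    intOn hbdd (hφc.mul hMpc)
  have hIVφ : IntegrableOn (fun x => Vfun p lam α ψ x * φ x) Ω := intOn hbdd (hVc.mul hφc)
  have hIVψφ : IntegrableOn (fun x => Vfun p lam α ψ x * (ψ x * φ x)) Ω :=
    intOn hbdd (hVc.mul (hψc.mul hφc))
  have hgreen := green hopen hbdd hφ2 hψ2 hφ0 hψ0
  have heq1 : (∫ x in Ω, φ x * max (α + lam * ψ x) 0 ^ p) = (p * lam + σ) * T := by
    have h2 : EqOn (fun x => φ x * lapl ψ x - ψ x * lapl φ x)
        (fun x => (p * lam + σ) * (Vfun p lam α ψ x * (ψ x * (φ x - c)))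
          - φ x * max (α + lam * ψ x) 0 ^ p) Ω := by
      intro x hx
      have e1 : lapl ψ x = -(max (α + lam * ψ x) 0 ^ p) := by linarith [hpde x hx]
      have e2 : lapl φ x = -((p * lam + σ) * (Vfun p lam α ψ x * (φ x - c))) := by
        linarith [hφpde x hx]
      simp only [e1, e2]
      ring
    rw [setIntegral_congr_fun hmeas h2,
      integral_sub (hIT.const_mul _) hIφM, integral_const_mul] at hgreen
    rw [← hT] at hgreen
    linarith
  have heq2 : (∫ x in Ω, φ x * max (α + lam * ψ x) 0 ^ p)
      = α * P + lam * ∫ x in Ω, Vfun p lam α ψ x * (ψ x * φ x) := by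
    have h2 : EqOn (fun x => φ x * max (α + lam * ψ x) 0 ^ p)
        (fun x => α * (Vfun p lam α ψ x * φ x)
          + lam * (Vfun p lam α ψ x * (ψ x * φ x))) Ω := by
      intro x _
      simp only [← hkey x]
      ring
    rw [setIntegral_congr_fun hmeas h2,
      integral_add (hIVφ.const_mul α) (hIVψφ.const_mul lam),
      integral_const_mul, integral_const_mul, ← hP]
  have heq3 : (∫ x in Ω, Vfun p lam α ψ x * (ψ x * φ x)) = T + c * Q := by
    have h2 : EqOn (fun x => Vfun p lam α ψ x * (ψ x * φ x))
        (fun x => Vfun p lam α ψ x * (ψ x * (φ x - c))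
          + c * (Vfun p lam α ψ x * ψ x)) Ω := by
      intro x _
      ring
    rw [setIntegral_congr_fun hmeas h2, integral_add hIT (hIVψ.const_mul c),
      integral_const_mul, ← hT, ← hQ]
  have hE : α * P + lam * (T + (P / m) * Q) = (p * lam + σ) * T := by
    rw [← hcPm, ← heq3, ← heq2]
    exact heq1
  show (α + lam * avgV Ω p lam α ψ ψ) * c = (lam * (p - 1) + σ) * (T / m)
  have hA : avgV Ω p lam α ψ ψ = Q / m := by rw [avgV, hQ, hm]
  rw [hA, hcPm]
  have hE2 : α * P * m + lam * (T * m + P * Q) = (p * lam + σ) * T * m := by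
    field_simp at hE
    linarith [hE]
  field_simp
  linear_combination hE2

end
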